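/- Suppose every observed datum dⱼ has zero G-regret for its true type θⱼ, i.e., dⱼ maximizes a ↦ E[u^G(a, D₋ⱼ, θⱼ)] over A. Then in every mixed Nash equilibrium of the revelation game, every data-player's expected utility equals 0; equivalently, every reported pair (θ̂, â) in the support of any data-player j's equilibrium strategy satisfies Regret^G_j(θ̂) = 0 and Regret^{G'}_j(â, θ̂, σ₋ⱼ) = 0, where σ₋ⱼ is the equilibrium mixed profile of the other data-players. -/

import Mathlib

open Finset

/-- The multiset of the other observed data points. -/
def othersData {A : Type} {m : ℕ} (d : Fin m → A) (j : Fin m) : Multiset A :=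
  (Finset.univ : Finset {k : Fin m // k ≠ j}).val.map fun k => d k.1

/-- The `G`-regret of a reported type `th` for data point `j`: the gap between the best
achievable utility against the other observed data points and the utility of the
observed action `d j`. -/
noncomputable def regretG {Θ A : Type} [Fintype A] [Nonempty A] {m : ℕ}
    (uG : A → Multiset A → Θ → ℝ) (d : Fin m → A) (j : Fin m) (th : Θ) : ℝ :=
  (Finset.univ.sup' Finset.univ_nonempty fun a => uG a (othersData d j) th)
    - uG (d j) (othersData d j) th

/-- The expected `G'`-utility of counterfactual action `a` with reported type `th`,
against the mixed profile `σ` of the other data-players' reported type–action pairs. -/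
noncomputable def expUG' {Θ A' : Type} [Fintype Θ] [Fintype A'] {m : ℕ}
    (uG' : A' → Multiset A' → Θ → ℝ) (σ : Fin m → Θ × A' → ℝ) (j : Fin m)
    (a : A') (th : Θ) : ℝ :=
  ∑ p : {k : Fin m // k ≠ j} → Θ × A',
    (∏ k, σ k.1 (p k)) *
      uG' a ((Finset.univ : Finset {k : Fin m // k ≠ j}).val.map fun k => (p k).2) th

/-- The `G'`-regret of a reported pair (type `th`, action `ahat`) for data-player `j`
against the mixed profile `σ` of the other data-players. -/
noncomputable def regretG' {Θ A' : Type} [Fintype Θ] [Fintype A'] [Nonempty A'] {m : ℕ}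
    (uG' : A' → Multiset A' → Θ → ℝ) (σ : Fin m → Θ × A' → ℝ) (j : Fin m)
    (ahat : A') (th : Θ) : ℝ :=
  (Finset.univ.sup' Finset.univ_nonempty fun a => expUG' uG' σ j a th)
    - expUG' uG' σ j ahat th

/-- The revelation-game utility of data-player `j` reporting the pair `x`: the negative
of the maximum of the `G`-regret of the reported type and the `G'`-regret of the
reported pair against the others' mixed profile `σ`. -/
noncomputable def revU {Θ A A' : Type} [Fintype Θ] [Fintype A] [Fintype A']
    [Nonempty A] [Nonempty A'] {m : ℕ}
    (uG : A → Multiset A → Θ → ℝ) (uG' : A' → Multiset A' → Θ → ℝ)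
    (d : Fin m → A) (σ : Fin m → Θ × A' → ℝ) (j : Fin m) (x : Θ × A') : ℝ :=
  -max (regretG uG d j x.1) (regretG' uG' σ j x.2 x.1)

/-- A probability mass function on a finite set. -/
def IsPMF {X : Type} [Fintype X] (p : X → ℝ) : Prop :=
  (∀ x, 0 ≤ p x) ∧ ∑ x, p x = 1

/-- The expected revelation-game utility of data-player `j` playing the mixed strategy
`τ` against the profile `σ`. -/
noncomputable def expRevU {Θ A A' : Type} [Fintype Θ] [Fintype A] [Fintype A']
    [Nonempty A] [Nonempty A'] {m : ℕ}
    (uG : A → Multiset A → Θ → ℝ) (uG' : A' → Multiset A' → Θ → ℝ)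
    (d : Fin m → A) (σ : Fin m → Θ × A' → ℝ) (j : Fin m) (τ : Θ × A' → ℝ) : ℝ :=
  ∑ x, τ x * revU uG uG' d σ j x

/-- A mixed Nash equilibrium of the revelation game: a profile of probability mass
functions over type–action pairs, one per data-player, such that each player's mixed
strategy maximizes their expected revelation-game utility given the others'. -/
def IsMixedNE {Θ A A' : Type} [Fintype Θ] [Fintype A] [Fintype A']
    [Nonempty A] [Nonempty A'] {m : ℕ}
    (uG : A → Multiset A → Θ → ℝ) (uG' : A' → Multiset A' → Θ → ℝ)
    (d : Fin m → A) (σ : Fin m → Θ × A' → ℝ) : Prop :=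
  (∀ j, IsPMF (σ j)) ∧
  ∀ j (τ : Θ × A' → ℝ), IsPMF τ →
    expRevU uG uG' d σ j τ ≤ expRevU uG uG' d σ j (σ j)

/-- If every observed datum `d j` has zero `G`-regret for its true type `trueθ j`
(i.e. `d j` maximizes the `G`-utility against the other data points for type
`trueθ j`), then in every mixed Nash equilibrium of the revelation game every
data-player's expected utility equals `0`; equivalently, every reported pair in the
support of any data-player's equilibrium strategy has zero `G`-regret and zero
`G'`-regret. -/
theorem revelation_game_equilibrium_zero_regret
    (Θ A A' : Type) [Fintype Θ] [Fintype A] [Fintype A']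
    [Nonempty A] [Nonempty A']
    (m : ℕ) (uG : A → Multiset A → Θ → ℝ) (uG' : A' → Multiset A' → Θ → ℝ)
    (d : Fin m → A) (trueθ : Fin m → Θ)
    (hzero : ∀ j a, uG a (othersData d j) (trueθ j) ≤ uG (d j) (othersData d j) (trueθ j))
    (σ : Fin m → Θ × A' → ℝ) (hNE : IsMixedNE uG uG' d σ) :
    (∀ j, expRevU uG uG' d σ j (σ j) = 0) ∧
    (∀ j (th : Θ) (ahat : A'), 0 < σ j (th, ahat) →
      regretG uG d j th = 0 ∧ regretG' uG' σ j ahat th = 0) := by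
  classical
  obtain ⟨hpmf, hbest⟩ := hNE
  have hrG_nonneg : ∀ j th, 0 ≤ regretG uG d j th := by
    intro j th
    have := Finset.le_sup' (fun a => uG a (othersData d j) th) (Finset.mem_univ (d j))
    simp only [regretG, sub_nonneg]; exact this
  have hrG'_nonneg : ∀ j a th, 0 ≤ regretG' uG' σ j a th := by
    intro j a th
    have := Finset.le_sup' (fun a => expUG' uG' σ j a th) (Finset.mem_univ a)
    simp only [regretG', sub_nonneg]; exact this
  have hrevU_nonpos : ∀ j x, revU uG uG' d σ j x ≤ 0 := by
    intro j x
    have := le_max_left (regretG uG d j x.1) (regretG' uG' σ j x.2 x.1)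
    have h0 := hrG_nonneg j x.1
    simp only [revU, neg_nonpos]
    exact le_trans h0 this
  -- equilibrium expected utility is 0
  have hEq0 : ∀ j, expRevU uG uG' d σ j (σ j) = 0 := by
    intro j
    have hle : expRevU uG uG' d σ j (σ j) ≤ 0 := by
      apply Finset.sum_nonpos
      intro x _
      exact mul_nonpos_of_nonneg_of_nonpos ((hpmf j).1 x) (hrevU_nonpos j x)
    -- deviation: pure strategy (trueθ j, a*)
    obtain ⟨astar, -, hastar⟩ := Finset.exists_mem_eq_sup' (Finset.univ_nonempty (α := A'))
      (fun a => expUG' uG' σ j a (trueθ j))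
    set x0 : Θ × A' := (trueθ j, astar) with hx0
    have hrG0 : regretG uG d j (trueθ j) = 0 := by
      have h1 : (Finset.univ.sup' Finset.univ_nonempty fun a => uG a (othersData d j) (trueθ j))
          ≤ uG (d j) (othersData d j) (trueθ j) :=
        Finset.sup'_le _ _ fun a _ => hzero j a
      have h2 := hrG_nonneg j (trueθ j)
      simp only [regretG] at h2 ⊢
      linarith
    have hrG'0 : regretG' uG' σ j astar (trueθ j) = 0 := by
      simp [regretG', hastar]
    have hτpmf : IsPMF (fun x : Θ × A' => if x = x0 then (1:ℝ) else 0) := by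
      constructor
      · intro x; dsimp only; split <;> norm_num
      · simp
    have hge := hbest j _ hτpmf
    have hval : expRevU uG uG' d σ j (fun x : Θ × A' => if x = x0 then (1:ℝ) else 0) = 0 := by
      simp only [expRevU, ite_mul, one_mul, zero_mul]
      rw [Finset.sum_ite_eq' Finset.univ x0]
      simp [revU, hx0, hrG0, hrG'0]
    linarith [hle, hval ▸ hge]
  refine ⟨hEq0, ?_⟩
  intro j th ahat hpos
  have hterms : ∀ x ∈ Finset.univ, σ j x * revU uG uG' d σ j x ≤ 0 :=
    fun x _ => mul_nonpos_of_nonneg_of_nonpos ((hpmf j).1 x) (hrevU_nonpos j x)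
  have hz : σ j (th, ahat) * revU uG uG' d σ j (th, ahat) = 0 := by
    have := (Finset.sum_eq_zero_iff_of_nonpos hterms).mp (hEq0 j) (th, ahat) (Finset.mem_univ _)
    exact this
  have hrev0 : revU uG uG' d σ j (th, ahat) = 0 := by
    rcases mul_eq_zero.mp hz with h | h
    · exact absurd h (ne_of_gt hpos)
    · exact h
  have hmax : max (regretG uG d j th) (regretG' uG' σ j ahat th) = 0 := by
    have := hrev0
    simp only [revU, neg_eq_zero] at this
    exact this
  constructor
  · exact le_antisymm (hmax ▸ le_max_left _ _) (hrG_nonneg j th)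
  · exact le_antisymm (hmax ▸ le_max_right _ _) (hrG'_nonneg j ahat th)
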